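/- Let G be an acyclic transitive digraph on a finite vertex set V and let H be any orientation of the complement of G. Then G \ ucl(tcl(H)) is a 2-dimensional acyclic transitive digraph. -/

import Mathlib

/-- Undirected closure of a digraph: `E ∪ E⁻¹`. -/
def ucl {V : Type*} (E : V → V → Prop) : V → V → Prop := fun a b => E a b ∨ E b a

/-- Complement of a digraph: all pairs of distinct vertices not in `ucl E`. -/
def cmpl {V : Type*} (E : V → V → Prop) : V → V → Prop := fun a b => a ≠ b ∧ ¬ ucl E a b

/-- A digraph is oriented iff `E ∩ E⁻¹ = ∅`. -/
def Oriented {V : Type*} (E : V → V → Prop) : Prop := ∀ a b, E a b → ¬ E b a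

/-- `O` is an orientation of `E`: a maximal oriented subset of `E`. -/
def IsOrientation {V : Type*} (O E : V → V → Prop) : Prop :=
  (∀ a b, O a b → E a b) ∧ Oriented O ∧
    ∀ O' : V → V → Prop, (∀ a b, O' a b → E a b) → Oriented O' →
      (∀ a b, O a b → O' a b) → ∀ a b, O' a b → O a b

/-- Transitivity of a digraph: `(a,b) ∈ E`, `(b,c) ∈ E` and `a ≠ c` imply `(a,c) ∈ E`. -/
def TransD {V : Type*} (E : V → V → Prop) : Prop :=
  ∀ a b c, E a b → E b c → a ≠ c → E a c

/-- Transitive closure of a digraph. -/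
def tcl {V : Type*} (E : V → V → Prop) : V → V → Prop := Relation.TransGen E

/-- A digraph is acyclic iff its transitive closure is irreflexive. -/
def Acyclic {V : Type*} (E : V → V → Prop) : Prop := Irreflexive (tcl E)

/-- A transitive orientation of `E` is an orientation of `E` that is transitive. -/
def IsTransOrientation {V : Type*} (O E : V → V → Prop) : Prop :=
  IsOrientation O E ∧ TransD O

/-- `E` is transitively orientable iff it has a transitive orientation. -/
def TransOrientable {V : Type*} (E : V → V → Prop) : Prop := ∃ O, IsTransOrientation O E

/-- `L` is a strict linear order on the vertex set. -/
def IsStrictLinear {V : Type*} (L : V → V → Prop) : Prop :=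
  Irreflexive L ∧ Transitive L ∧ ∀ a b : V, a ≠ b → L a b ∨ L b a

/-- `E` is 2-dimensional: the intersection of two strict linear orders. -/
def TwoDim {V : Type*} (E : V → V → Prop) : Prop :=
  ∃ L₁ L₂ : V → V → Prop, IsStrictLinear L₁ ∧ IsStrictLinear L₂ ∧
    ∀ a b, E a b ↔ L₁ a b ∧ L₂ a b

/-- Direct forcing `Γ` between edges of an undirected graph `E`:
`(a,b) Γ (c,d)` iff both are edges of `E` and either `a = c` with `b, d` non-adjacent,
or `b = d` with `a, c` non-adjacent. -/
def Forces {V : Type*} (E : V → V → Prop) (e f : V × V) : Prop :=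
  E e.1 e.2 ∧ E f.1 f.2 ∧
    ((e.1 = f.1 ∧ e.2 ≠ f.2 ∧ ¬ E e.2 f.2) ∨ (e.2 = f.2 ∧ e.1 ≠ f.1 ∧ ¬ E e.1 f.1))

/-- `S` is a 2-dimensional subgraph of `G`: a subgraph that is a 2-dimensional
acyclic transitive digraph. -/
def TwoDimSubgraph {V : Type*} (G S : V → V → Prop) : Prop :=
  (∀ a b, S a b → G a b) ∧ Irreflexive S ∧ TransD S ∧ Acyclic S ∧ TwoDim S

/-- A permutation graph: an undirected graph such that both it and its complement
are transitively orientable. -/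
def PermGraph {V : Type*} (E : V → V → Prop) : Prop :=
  Irreflexive E ∧ (∀ a b, E a b → E b a) ∧ TransOrientable E ∧ TransOrientable (cmpl E)

/-- `S` is a permutation subgraph of `G`: an undirected subgraph of `G` that is a
permutation graph. -/
def PermSubgraph {V : Type*} (G S : V → V → Prop) : Prop :=
  (∀ a b, S a b → G a b) ∧ PermGraph S

/-- Every irreflexive transitive relation extends to a strict linear order. -/
lemma exists_strict_linear_ext {V : Type*} (R : V → V → Prop) (hirr : Irreflexive R)
    (htr : Transitive R) : ∃ L : V → V → Prop, IsStrictLinear L ∧ ∀ a b, R a b → L a b := by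
  haveI : IsPartialOrder V (fun a b => R a b ∨ a = b) := by
    refine { refl := fun a => Or.inr rfl, trans := ?_, antisymm := ?_ }
    · rintro a b c (hab | rfl) (hbc | rfl)
      · exact Or.inl (htr hab hbc)
      · exact Or.inl hab
      · exact Or.inl hbc
      · exact Or.inr rfl
    · rintro a b (hab | rfl) (hba | h)
      · exact absurd (htr hab hba) (hirr a)
      · exact h.symm
      · rfl
      · rfl
  obtain ⟨s, hs, hrs⟩ := extend_partialOrder (fun a b => R a b ∨ a = b)
  refine ⟨fun a b => s a b ∧ a ≠ b, ⟨fun a h => h.2 rfl, ?_, ?_⟩, ?_⟩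
  · rintro a b c ⟨h1, hab⟩ ⟨h2, hbc⟩
    refine ⟨hs.trans _ _ _ h1 h2, fun h => hab ?_⟩
    exact hs.antisymm _ _ h1 (h ▸ h2)
  · intro a b hab
    rcases hs.total a b with h | h
    · exact Or.inl ⟨h, hab⟩
    · exact Or.inr ⟨h, hab.symm⟩
  · intro a b hab
    refine ⟨hrs a b (Or.inl hab), fun h => hirr a (h ▸ hab)⟩

section PathLemmas

variable {V : Type*} {G H : V → V → Prop}

/-- Forward propagation along an `H`-path of a `G`-predecessor. -/
lemma path_left (htrans : TransD G)
    (hsub : ∀ a b, H a b → a ≠ b ∧ ¬ G a b ∧ ¬ G b a)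
    (htot : ∀ a b, a ≠ b → ¬ G a b → ¬ G b a → H a b ∨ H b a)
    {b c : V} (hbc : ¬ Relation.TransGen H b c) {x : V}
    (hxc : Relation.TransGen H x c) : G x b → ¬ Relation.TransGen H x b → G c b := by
  induction hxc using Relation.TransGen.head_induction_on with
  | single h =>
    intro hab hKab
    rename_i a
    rcases eq_or_ne c b with rfl | hcb
    · exact absurd (Relation.TransGen.single h) hKab
    by_cases hGcb : G c b
    · exact hGcb
    by_cases hGbc : G b c
    · obtain ⟨hac, hnac, _⟩ := hsub a c h
      exact absurd (htrans a b c hab hGbc hac) hnac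
    rcases htot c b hcb hGcb hGbc with h' | h'
    · exact absurd ((Relation.TransGen.single h).tail h') hKab
    · exact absurd (Relation.TransGen.single h') hbc
  | head h' h IH =>
    intro hab hKab
    rename_i a z
    rcases eq_or_ne z b with rfl | hzb
    · exact absurd (Relation.TransGen.single h') hKab
    by_cases hGzb : G z b
    · exact IH hGzb (fun hk => hKab (hk.head h'))
    by_cases hGbz : G b z
    · obtain ⟨haz, hnaz, _⟩ := hsub a z h'
      exact absurd (htrans a b z hab hGbz haz) hnaz
    rcases htot z b hzb hGzb hGbz with h'' | h''
    · exact absurd ((Relation.TransGen.single h'').head h') hKab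
    · exact absurd (h.head h'') hbc

/-- Forward propagation along an `H`-path of a `G`-successor. -/
lemma path_right (htrans : TransD G)
    (hsub : ∀ a b, H a b → a ≠ b ∧ ¬ G a b ∧ ¬ G b a)
    (htot : ∀ a b, a ≠ b → ¬ G a b → ¬ G b a → H a b ∨ H b a)
    {a b : V} (hba : ¬ Relation.TransGen H b a) {x : V}
    (hxa : Relation.TransGen H x a) : G b x → ¬ Relation.TransGen H x b → G b a := by
  induction hxa using Relation.TransGen.head_induction_on with
  | single h =>
    intro hbx hxb
    rename_i x
    rcases eq_or_ne a b with rfl | hab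
    · exact absurd (Relation.TransGen.single h) hxb
    by_cases hGba : G b a
    · exact hGba
    by_cases hGab : G a b
    · obtain ⟨hxa', _, hnax⟩ := hsub x a h
      exact absurd (htrans a b x hGab hbx hxa'.symm) hnax
    rcases htot a b hab hGab hGba with h' | h'
    · exact absurd ((Relation.TransGen.single h).tail h') hxb
    · exact absurd (Relation.TransGen.single h') hba
  | head h' h IH =>
    intro hbx hxb
    rename_i x z
    rcases eq_or_ne z b with rfl | hzb
    · exact absurd (Relation.TransGen.single h') hxb
    by_cases hGbz : G b z
    · exact IH hGbz (fun hk => hxb (hk.head h'))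
    by_cases hGzb : G z b
    · obtain ⟨hxz, _, hnzx⟩ := hsub x z h'
      exact absurd (htrans z b x hGzb hbx hxz.symm) hnzx
    rcases htot z b hzb hGzb hGbz with h'' | h''
    · exact absurd ((Relation.TransGen.single h'').head h') hxb
    · exact absurd (h.head h'') hba

end PathLemmas

theorem induced_subgraph_two_dimensional
    {V : Type*} [Fintype V] (G H : V → V → Prop)
    (hirr : Irreflexive G) (hacyc : Acyclic G) (htrans : TransD G)
    (hH : IsOrientation H (cmpl G)) :
    Irreflexive (fun a b => G a b ∧ ¬ ucl (tcl H) a b) ∧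
    TransD (fun a b => G a b ∧ ¬ ucl (tcl H) a b) ∧
    Acyclic (fun a b => G a b ∧ ¬ ucl (tcl H) a b) ∧
    TwoDim (fun a b => G a b ∧ ¬ ucl (tcl H) a b) := by
  classical
  set S : V → V → Prop := fun a b => G a b ∧ ¬ ucl (tcl H) a b with hSdef
  -- basic facts
  have hGasym : ∀ a b, G a b → ¬ G b a := by
    intro a b h1 h2
    exact hacyc a ((Relation.TransGen.single h1).tail h2)
  have hsub : ∀ a b, H a b → a ≠ b ∧ ¬ G a b ∧ ¬ G b a := by
    intro a b hab
    obtain ⟨hne, hn⟩ := hH.1 a b hab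
    exact ⟨hne, fun h => hn (Or.inl h), fun h => hn (Or.inr h)⟩
  have htot : ∀ a b : V, a ≠ b → ¬ G a b → ¬ G b a → H a b ∨ H b a := by
    intro a b hab hnG hnG'
    by_contra hcon
    push_neg at hcon
    obtain ⟨h1, h2⟩ := hcon
    have hO' : ∀ x y, (H x y ∨ (x = a ∧ y = b)) → cmpl G x y := by
      rintro x y (h | ⟨rfl, rfl⟩)
      · exact hH.1 x y h
      · exact ⟨hab, fun h => h.elim hnG hnG'⟩
    have hOr : Oriented (fun x y => H x y ∨ (x = a ∧ y = b)) := by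
      rintro x y (h | ⟨rfl, rfl⟩) h'
      · rcases h' with h' | ⟨rfl, rfl⟩
        · exact hH.2.1 x y h h'
        · exact h2 h
      · rcases h' with h' | ⟨h1', h2'⟩
        · exact h2 h'
        · exact hab h2' 
    exact h1 (hH.2.2 _ hO' hOr (fun x y h => Or.inl h) a b (Or.inr ⟨rfl, rfl⟩))
  have hKtrans : ∀ {a b c : V}, tcl H a b → tcl H b c → tcl H a c :=
    fun h1 h2 => Relation.TransGen.trans h1 h2
  have hSd : ∀ a b, S a b → G a b ∧ ¬ tcl H a b ∧ ¬ tcl H b a := by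
    intro a b ⟨h1, h2⟩
    exact ⟨h1, fun h => h2 (Or.inl h), fun h => h2 (Or.inr h)⟩
  have hSc : ∀ a b, G a b → ¬ tcl H a b → ¬ tcl H b a → S a b :=
    fun a b h1 h2 h3 => ⟨h1, fun h => h.elim h2 h3⟩
  -- pair totality
  have hpair : ∀ a b : V, a ≠ b → ¬ tcl H a b → ¬ tcl H b a → G a b ∨ G b a := by
    intro a b hab hK1 hK2
    by_cases h1 : G a b
    · exact Or.inl h1
    by_cases h2 : G b a
    · exact Or.inr h2
    rcases htot a b hab h1 h2 with h | h
    · exact absurd (Relation.TransGen.single h) hK1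
    · exact absurd (Relation.TransGen.single h) hK2
  -- transitivity of S
  have hStrans : TransD S := by
    intro a b c hab hbc hac
    obtain ⟨hGab, hKab, hKba⟩ := hSd _ _ hab
    obtain ⟨hGbc, hKbc, hKcb⟩ := hSd _ _ hbc
    refine hSc _ _ (htrans a b c hGab hGbc hac) ?_ ?_
    · intro hKac
      exact hGasym b c hGbc (path_left htrans hsub htot hKbc hKac hGab hKab)
    · intro hKca
      exact hGasym a b hGab (path_right htrans hsub htot hKba hKca hGbc hKcb)
  have hSasym : ∀ a b, S a b → ¬ S b a := fun a b h1 h2 => hGasym a b h1.1 h2.1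
  have hSS : ∀ a b c, S a b → S b c → S a c := by
    intro a b c h1 h2
    rcases eq_or_ne a c with rfl | hac
    · exact absurd h2 (hSasym a b h1)
    · exact hStrans a b c h1 h2 hac
  have hSirr : Irreflexive S := fun a h => hirr a h.1
  have hSacyc : Acyclic S := by
    intro a ha
    exact hacyc a (Relation.TransGen.mono (r := S) (p := G) (fun x y h => h.1) a a ha)
  refine ⟨hSirr, hStrans, hSacyc, ?_⟩
  -- first linear order: extend S ∪ (K \ K⁻¹)
  have hA1irr : Irreflexive (fun a b => S a b ∨ (tcl H a b ∧ ¬ tcl H b a)) := by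
    rintro a (h | ⟨h1, h2⟩)
    · exact hSirr a h
    · exact h2 h1
  have hA1trans : Transitive (fun a b => S a b ∨ (tcl H a b ∧ ¬ tcl H b a)) := by
    rintro a b c (h1 | ⟨hKab, hKba⟩) (h2 | ⟨hKbc, hKcb⟩)
    · exact Or.inl (hSS a b c h1 h2)
    · -- S a b, then K b c strictly
      obtain ⟨hGab, hKab, hKba⟩ := hSd _ _ h1
      have hKca : ¬ tcl H c a := fun h => hKba (hKtrans hKbc h)
      by_cases hKac : tcl H a c
      · exact Or.inr ⟨hKac, hKca⟩
      have hac : a ≠ c := by rintro rfl; exact hKba hKbc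
      rcases hpair a c hac hKac hKca with hG | hG
      · exact Or.inl (hSc a c hG hKac hKca)
      · exfalso
        have hSca : S c a := hSc c a hG hKca hKac
        exact (hSd _ _ (hSS c a b hSca h1)).2.2 hKbc
    · -- K a b strictly, then S b c
      obtain ⟨hGbc, hKbc, hKcb⟩ := hSd _ _ h2
      have hKca : ¬ tcl H c a := fun h => hKcb (hKtrans h hKab)
      by_cases hKac : tcl H a c
      · exact Or.inr ⟨hKac, hKca⟩
      have hac : a ≠ c := by rintro rfl; exact hKcb hKab
      rcases hpair a c hac hKac hKca with hG | hG
      · exact Or.inl (hSc a c hG hKac hKca)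
      · exfalso
        have hSca : S c a := hSc c a hG hKca hKac
        exact (hSd _ _ (hSS b c a h2 hSca)).2.2 hKab
    · exact Or.inr ⟨hKtrans hKab hKbc, fun h => hKba (hKtrans hKbc h)⟩
  obtain ⟨L₁, hL1, hRL1⟩ := exists_strict_linear_ext _ hA1irr hA1trans
  have hL1asym : ∀ a b, L₁ a b → ¬ L₁ b a := fun a b h1 h2 => hL1.1 a (hL1.2.1 h1 h2)
  -- second relation: S ∪ M where M = (K⁻¹ \ K) ∪ (symmetric K reversed w.r.t. L₁)
  set M : V → V → Prop := fun a b =>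
    (tcl H b a ∧ ¬ tcl H a b) ∨ (tcl H a b ∧ tcl H b a ∧ L₁ b a) with hMdef
  have hMK : ∀ a b, M a b → tcl H b a := by
    rintro a b (⟨h, _⟩ | ⟨_, h, _⟩) <;> exact h
  have hMtrans : ∀ a b c, M a b → M b c → M a c := by
    intro a b c h1 h2
    have hKba := hMK _ _ h1
    have hKcb := hMK _ _ h2
    have hKca := hKtrans hKcb hKba
    by_cases hKac : tcl H a c
    · have hKab : tcl H a b := hKtrans hKac hKcb
      have hKbc : tcl H b c := hKtrans hKba hKac
      have hL1ba : L₁ b a := by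
        rcases h1 with ⟨_, hn⟩ | ⟨_, _, h⟩
        · exact absurd hKab hn
        · exact h
      have hL1cb : L₁ c b := by
        rcases h2 with ⟨_, hn⟩ | ⟨_, _, h⟩
        · exact absurd hKbc hn
        · exact h
      exact Or.inr ⟨hKac, hKca, hL1.2.1 hL1cb hL1ba⟩
    · exact Or.inl ⟨hKca, hKac⟩
  have hMirr : Irreflexive M := by
    rintro a (⟨h1, h2⟩ | ⟨_, _, h⟩)
    · exact h2 h1
    · exact hL1.1 a h
  have hA2irr : Irreflexive (fun a b => S a b ∨ M a b) := by
    rintro a (h | h)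
    · exact hSirr a h
    · exact hMirr a h
  have hA2trans : Transitive (fun a b => S a b ∨ M a b) := by
    rintro a b c (h1 | h1) (h2 | h2)
    · exact Or.inl (hSS a b c h1 h2)
    · -- S a b then M b c
      obtain ⟨hGab, hKab, hKba⟩ := hSd _ _ h1
      have hKcb := hMK _ _ h2
      have hKac : ¬ tcl H a c := fun h => hKab (hKtrans h hKcb)
      by_cases hKca : tcl H c a
      · exact Or.inr (Or.inl ⟨hKca, hKac⟩)
      have hac : a ≠ c := by rintro rfl; exact hKab hKcb
      rcases hpair a c hac hKac hKca with hG | hG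
      · exact Or.inl (hSc a c hG hKac hKca)
      · exfalso
        have hSca : S c a := hSc c a hG hKca hKac
        exact (hSd _ _ (hSS c a b hSca h1)).2.1 hKcb
    · -- M a b then S b c
      have hKba := hMK _ _ h1
      obtain ⟨hGbc, hKbc, hKcb⟩ := hSd _ _ h2
      have hKac : ¬ tcl H a c := fun h => hKbc (hKtrans hKba h)
      by_cases hKca : tcl H c a
      · exact Or.inr (Or.inl ⟨hKca, hKac⟩)
      have hac : a ≠ c := by rintro rfl; exact hKbc hKba
      rcases hpair a c hac hKac hKca with hG | hG
      · exact Or.inl (hSc a c hG hKac hKca)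
      · exfalso
        have hSca : S c a := hSc c a hG hKca hKac
        exact (hSd _ _ (hSS b c a h2 hSca)).2.1 hKba
    · exact Or.inr (hMtrans a b c h1 h2)
  obtain ⟨L₂, hL2, hRL2⟩ := exists_strict_linear_ext _ hA2irr hA2trans
  have hL2asym : ∀ a b, L₂ a b → ¬ L₂ b a := fun a b h1 h2 => hL2.1 a (hL2.2.1 h1 h2)
  refine ⟨L₁, L₂, hL1, hL2, fun a b => ⟨fun h => ⟨hRL1 a b (Or.inl h), hRL2 a b (Or.inl h)⟩, ?_⟩⟩
  rintro ⟨h1, h2⟩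
  by_contra hnS
  have hab : a ≠ b := by rintro rfl; exact hL1.1 a h1
  by_cases hKab : tcl H a b
  · by_cases hKba : tcl H b a
    · exact hL2asym a b h2 (hRL2 b a (Or.inr (Or.inr ⟨hKba, hKab, h1⟩)))
    · exact hL2asym a b h2 (hRL2 b a (Or.inr (Or.inl ⟨hKab, hKba⟩)))
  · by_cases hKba : tcl H b a
    · exact hL1asym a b h1 (hRL1 b a (Or.inr ⟨hKba, hKab⟩))
    · rcases hpair a b hab hKab hKba with hG | hG
      · exact hnS (hSc a b hG hKab hKba)
      · exact hL1asym a b h1 (hRL1 b a (Or.inl (hSc b a hG hKba hKab)))
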